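/- arXiv:math/0107227 — 3 statements merged into one kernel-verified Lean document; each statement's English description precedes it below -/
import Mathlib

section
/- An n × n integer matrix with determinant ±1 can be obtained from the identity matrix by a finite sequence of row operations, each of which either negates a row or adds one row to another row. -/
/-- A row move: negate a row, or add one row to another row. -/
def RowMove (n : ℕ) (A B : Matrix (Fin n) (Fin n) ℤ) : Prop :=
  (∃ i, B = A.updateRow i (-(A i))) ∨
  (∃ i j, i ≠ j ∧ B = A.updateRow j (A j + A i))

namespace RowMoveAux

open Matrix

variable {n : ℕ}

abbrev R (n : ℕ) : Matrix (Fin n) (Fin n) ℤ → Matrix (Fin n) (Fin n) ℤ → Prop :=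
  Relation.ReflTransGen (RowMove n)

lemma updateRow_updateRow (A : Matrix (Fin n) (Fin n) ℤ) (i : Fin n) (r s : Fin n → ℤ) :
    (A.updateRow i r).updateRow i s = A.updateRow i s := by
  ext a b
  by_cases h : a = i <;> simp [Matrix.updateRow_apply, h]

lemma r_neg (A : Matrix (Fin n) (Fin n) ℤ) (i : Fin n) :
    R n A (A.updateRow i (-(A i))) :=
  Relation.ReflTransGen.single (Or.inl ⟨i, rfl⟩)

lemma r_add (A : Matrix (Fin n) (Fin n) ℤ) {i j : Fin n} (h : i ≠ j) :
    R n A (A.updateRow j (A j + A i)) :=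
  Relation.ReflTransGen.single (Or.inr ⟨i, j, h, rfl⟩)

lemma r_sub (A : Matrix (Fin n) (Fin n) ℤ) {i j : Fin n} (h : i ≠ j) :
    R n A (A.updateRow j (A j - A i)) := by
  have s1 := r_neg A j
  have s2 := r_add (A.updateRow j (-(A j))) h
  rw [Matrix.updateRow_self, Matrix.updateRow_ne h, updateRow_updateRow] at s2
  have s3 := r_neg (A.updateRow j (-(A j) + A i)) j
  rw [Matrix.updateRow_self, updateRow_updateRow] at s3
  have e : -(-(A j) + A i) = A j - A i := by
    funext k; simp; ring
  rw [e] at s3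
  exact (s1.trans s2).trans s3

lemma r_smul_add (A : Matrix (Fin n) (Fin n) ℤ) {i j : Fin n} (h : i ≠ j) (c : ℤ) :
    R n A (A.updateRow j (A j + c • A i)) := by
  induction c using Int.induction_on with
  | zero => simpa using Relation.ReflTransGen.refl
  | succ k ih =>
      refine ih.trans ?_
      have s := r_add (A.updateRow j (A j + (k : ℤ) • A i)) h
      rw [Matrix.updateRow_self, Matrix.updateRow_ne h, updateRow_updateRow] at s
      have e : A j + (k : ℤ) • A i + A i = A j + ((k : ℤ) + 1) • A i := by
        funext l; simp [add_mul]; ring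
      rwa [e] at s
  | pred k ih =>
      refine ih.trans ?_
      have s := r_sub (A.updateRow j (A j + (-(k : ℤ)) • A i)) h
      rw [Matrix.updateRow_self, Matrix.updateRow_ne h, updateRow_updateRow] at s
      have e : A j + (-(k : ℤ)) • A i - A i = A j + (-(k : ℤ) - 1) • A i := by
        funext l; simp [sub_mul]; ring
      rwa [e] at s

lemma rowMove_rev {A B : Matrix (Fin n) (Fin n) ℤ} (h : RowMove n A B) : R n B A := by
  rcases h with ⟨i, rfl⟩ | ⟨i, j, hij, rfl⟩
  · have s := r_neg (A.updateRow i (-(A i))) i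
    rwa [Matrix.updateRow_self, neg_neg, updateRow_updateRow, Matrix.updateRow_eq_self] at s
  · have s := r_sub (A.updateRow j (A j + A i)) hij
    rwa [Matrix.updateRow_self, Matrix.updateRow_ne hij, add_sub_cancel_right,
      updateRow_updateRow, Matrix.updateRow_eq_self] at s

lemma r_symm {A B : Matrix (Fin n) (Fin n) ℤ} (h : R n A B) : R n B A := by
  induction h with
  | refl => exact Relation.ReflTransGen.refl
  | tail _ hbc ih => exact (rowMove_rev hbc).trans ih

lemma rowMove_det {A B : Matrix (Fin n) (Fin n) ℤ} (h : RowMove n A B) (hA : IsUnit A.det) :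
    IsUnit B.det := by
  rcases h with ⟨i, rfl⟩ | ⟨i, j, hij, rfl⟩
  · have e : (-(A i)) = (-1 : ℤ) • A i := by funext k; simp
    rw [e, Matrix.det_updateRow_smul, Matrix.updateRow_eq_self]
    simpa using hA.neg
  · rwa [Matrix.det_updateRow_add_self A hij.symm]

lemma r_det {A B : Matrix (Fin n) (Fin n) ℤ} (h : R n A B) (hA : IsUnit A.det) :
    IsUnit B.det := by
  induction h with
  | refl => exact hA
  | tail _ hbc ih => exact rowMove_det hbc ih

/-! ### Lifting moves from size `n` to size `n+1` (fixing row 0 and column 0) -/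

def lift (r : Fin (n + 1) → ℤ) (M : Matrix (Fin n) (Fin n) ℤ) :
    Matrix (Fin (n + 1)) (Fin (n + 1)) ℤ :=
  fun i => Fin.cases r (fun i => (Fin.cons 0 (M i) : Fin (n + 1) → ℤ)) i

@[simp] lemma lift_zero (r : Fin (n + 1) → ℤ) (M : Matrix (Fin n) (Fin n) ℤ) :
    lift r M 0 = r := by
  simp [lift]

@[simp] lemma lift_succ (r : Fin (n + 1) → ℤ) (M : Matrix (Fin n) (Fin n) ℤ) (i : Fin n) :
    lift r M i.succ = (Fin.cons 0 (M i) : Fin (n + 1) → ℤ) := by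
  simp [lift]

lemma cons_neg (v : Fin n → ℤ) :
    (Fin.cons (0 : ℤ) (-v) : Fin (n + 1) → ℤ) = -(Fin.cons (0 : ℤ) v : Fin (n + 1) → ℤ) := by
  funext j
  cases j using Fin.cases <;> simp

lemma cons_add (u v : Fin n → ℤ) :
    (Fin.cons (0 : ℤ) (u + v) : Fin (n + 1) → ℤ)
      = (Fin.cons (0 : ℤ) u : Fin (n + 1) → ℤ) + (Fin.cons (0 : ℤ) v : Fin (n + 1) → ℤ) := by
  funext j
  cases j using Fin.cases <;> simp

lemma lift_updateRow (r : Fin (n + 1) → ℤ) (M : Matrix (Fin n) (Fin n) ℤ) (i : Fin n)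
    (v : Fin n → ℤ) :
    lift r (M.updateRow i v) = (lift r M).updateRow i.succ (Fin.cons 0 v) := by
  ext a b
  cases a using Fin.cases with
  | zero =>
      rw [Matrix.updateRow_ne (Fin.succ_ne_zero i).symm]
      rfl
  | succ a =>
      by_cases hai : a = i
      · subst hai
        rw [Matrix.updateRow_self, lift_succ, Matrix.updateRow_self]
      · have : a.succ ≠ i.succ := fun h => hai (Fin.succ_injective _ h)
        rw [Matrix.updateRow_ne this, lift_succ, lift_succ, Matrix.updateRow_ne hai]

lemma rowMove_lift (r : Fin (n + 1) → ℤ) {M M' : Matrix (Fin n) (Fin n) ℤ}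
    (h : RowMove n M M') : RowMove (n + 1) (lift r M) (lift r M') := by
  rcases h with ⟨i, rfl⟩ | ⟨i, j, hij, rfl⟩
  · exact Or.inl ⟨i.succ, by rw [lift_updateRow, lift_succ, cons_neg]⟩
  · refine Or.inr ⟨i.succ, j.succ, fun h => hij (Fin.succ_injective _ h), ?_⟩
    rw [lift_updateRow, lift_succ, lift_succ, cons_add]

lemma r_lift (r : Fin (n + 1) → ℤ) {M M' : Matrix (Fin n) (Fin n) ℤ} (h : R n M M') :
    R (n + 1) (lift r M) (lift r M') :=
  Relation.ReflTransGen.lift (lift r) (fun _ _ hm => rowMove_lift r hm) _ _ h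

/-! ### Clearing the first column -/

lemma col_zero_absurd (A : Matrix (Fin (n + 1)) (Fin (n + 1)) ℤ)
    (h : ∀ i, A i 0 = 0) (hA : IsUnit A.det) : False := by
  rw [Matrix.det_eq_zero_of_column_eq_zero 0 h] at hA
  exact not_isUnit_zero hA

lemma col_lemma (N : ℕ) : ∀ (A : Matrix (Fin (n + 1)) (Fin (n + 1)) ℤ),
    (∑ i, (A i 0).natAbs) ≤ N → IsUnit A.det →
    ∃ B, R (n + 1) A B ∧ ∀ i, B i 0 = if i = 0 then 1 else 0 := by
  induction N with
  | zero =>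
      intro A hN hA
      exfalso
      refine col_zero_absurd A (fun i => ?_) hA
      have h0 : ∑ i, (A i 0).natAbs = 0 := Nat.le_zero.mp hN
      have := (Finset.sum_eq_zero_iff.mp h0) i (Finset.mem_univ i)
      exact Int.natAbs_eq_zero.mp this
  | succ N ih =>
      intro A hN hA
      by_cases hex : ∃ i j, i ≠ j ∧ A i 0 ≠ 0 ∧ A j 0 ≠ 0 ∧ (A i 0).natAbs ≤ (A j 0).natAbs
      · obtain ⟨i, j, hij, hi0, hj0, hle⟩ := hex
        -- first make the pivot positive
        obtain ⟨A₁, hRA₁, h₁pos, h₁abs, h₁ne⟩ : ∃ A₁, R (n + 1) A A₁ ∧ 0 < A₁ i 0 ∧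
            (A₁ i 0).natAbs = (A i 0).natAbs ∧ ∀ k, k ≠ i → A₁ k = A k := by
          rcases hi0.lt_or_gt with hneg | hpos
          · refine ⟨A.updateRow i (-(A i)), r_neg A i, ?_, ?_, fun k hk => Matrix.updateRow_ne hk⟩
            · rw [Matrix.updateRow_self]; simpa using hneg
            · rw [Matrix.updateRow_self]; simp
          · exact ⟨A, Relation.ReflTransGen.refl, hpos, rfl, fun k _ => rfl⟩
        have hA₁sum : ∑ k, (A₁ k 0).natAbs = ∑ k, (A k 0).natAbs := by
          refine Finset.sum_congr rfl (fun k _ => ?_)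
          by_cases hk : k = i
          · subst hk; rw [h₁abs]
          · rw [h₁ne k hk]
        set q : ℤ := A₁ j 0 / A₁ i 0 with hq
        set B : Matrix (Fin (n + 1)) (Fin (n + 1)) ℤ := A₁.updateRow j (A₁ j + (-q) • A₁ i)
          with hBdef
        have hRB : R (n + 1) A₁ B := r_smul_add A₁ hij (-q)
        have hBj : B j 0 = A₁ j 0 % A₁ i 0 := by
          rw [hBdef, Matrix.updateRow_self]
          simp [Int.emod_def, hq]
          ring
        have hBne : ∀ k, k ≠ j → B k = A₁ k := fun k hk => Matrix.updateRow_ne hk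
        have hpiv : (A₁ i 0) ≠ 0 := ne_of_gt h₁pos
        have hmodlt : (B j 0).natAbs < (A₁ j 0).natAbs := by
          have h1 : 0 ≤ A₁ j 0 % A₁ i 0 := Int.emod_nonneg _ hpiv
          have h2 : A₁ j 0 % A₁ i 0 < A₁ i 0 := Int.emod_lt_of_pos _ h₁pos
          have h3 : A₁ j 0 = A j 0 := by rw [h₁ne j (Ne.symm hij)]
          rw [hBj]
          omega
        -- sum strictly decreases
        have hsum : ∑ k, (B k 0).natAbs ≤ N := by
          have e1 : (fun k => (B k 0).natAbs)
              = Function.update (fun k => (A₁ k 0).natAbs) j ((B j 0).natAbs) := by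
            funext k
            by_cases hk : k = j
            · subst hk; simp [Function.update]
            · rw [hBne k hk, Function.update_of_ne hk]
          have e2 : (fun k => (A₁ k 0).natAbs)
              = Function.update (fun k => (A₁ k 0).natAbs) j ((A₁ j 0).natAbs) := by
            funext k
            by_cases hk : k = j
            · subst hk; simp [Function.update]
            · rw [Function.update_of_ne hk]
          have s1 : ∑ k, (B k 0).natAbs
              = (B j 0).natAbs + ∑ k ∈ Finset.univ \ {j}, (A₁ k 0).natAbs := by
            rw [show (∑ k, (B k 0).natAbs) = ∑ k, Function.update
                (fun k => (A₁ k 0).natAbs) j ((B j 0).natAbs) k from by rw [← e1]]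
            exact Finset.sum_update_of_mem (Finset.mem_univ j) _ _
          have s2 : ∑ k, (A₁ k 0).natAbs
              = (A₁ j 0).natAbs + ∑ k ∈ Finset.univ \ {j}, (A₁ k 0).natAbs := by
            conv_lhs => rw [e2]
            exact Finset.sum_update_of_mem (Finset.mem_univ j) _ _
          have hle' : ∑ k, (A₁ k 0).natAbs ≤ N + 1 := by rw [hA₁sum]; exact hN
          omega
        obtain ⟨C, hRC, hC⟩ := ih B hsum (r_det (hRA₁.trans hRB) hA)
        exact ⟨C, (hRA₁.trans hRB).trans hRC, hC⟩
      · -- at most one nonzero entry in column 0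
        have hone : ∀ i j, i ≠ j → A i 0 ≠ 0 → A j 0 = 0 := by
          intro i j hij hi
          by_contra hj
          rcases le_total (A i 0).natAbs (A j 0).natAbs with h | h
          · exact hex ⟨i, j, hij, hi, hj, h⟩
          · exact hex ⟨j, i, hij.symm, hj, hi, h⟩
        by_cases hall : ∀ i, A i 0 = 0
        · exact absurd hA (fun h => col_zero_absurd A hall h)
        push_neg at hall
        obtain ⟨i, hi⟩ := hall
        have hzero : ∀ k, k ≠ i → A k 0 = 0 := fun k hk => hone i k (Ne.symm hk) hi
        have hdvd : A i 0 ∣ A.det := by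
          rw [Matrix.det_succ_column_zero]
          refine Finset.dvd_sum (fun k _ => ?_)
          by_cases hk : k = i
          · subst hk
            exact (dvd_mul_left _ _).mul_right _
          · rw [hzero k hk]
            simp
        have hu : IsUnit (A i 0) := isUnit_of_dvd_unit hdvd hA
        obtain ⟨C, hRC, hCi, hCne⟩ : ∃ C, R (n + 1) A C ∧ C i 0 = 1 ∧
            ∀ k, k ≠ i → C k = A k := by
          rcases Int.isUnit_iff.mp hu with h1 | h1
          · exact ⟨A, Relation.ReflTransGen.refl, h1, fun k _ => rfl⟩
          · refine ⟨A.updateRow i (-(A i)), r_neg A i, ?_, fun k hk => Matrix.updateRow_ne hk⟩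
            rw [Matrix.updateRow_self]
            simp [h1]
        have hCzero : ∀ k, k ≠ i → C k 0 = 0 := by
          intro k hk; rw [hCne k hk]; exact hzero k hk
        by_cases h0 : i = 0
        · subst h0
          refine ⟨C, hRC, fun k => ?_⟩
          by_cases hk : k = 0
          · subst hk; simpa using hCi
          · simp [hk, hCzero k hk]
        · -- move the pivot to row 0
          have h0i : (0 : Fin (n + 1)) ≠ i := Ne.symm h0
          set D : Matrix (Fin (n + 1)) (Fin (n + 1)) ℤ := C.updateRow 0 (C 0 + C i) with hD
          have hRD : R (n + 1) C D := r_add C h0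
          set E : Matrix (Fin (n + 1)) (Fin (n + 1)) ℤ := D.updateRow i (D i - D 0) with hE
          have hRE : R (n + 1) D E := r_sub D h0i
          refine ⟨E, hRC.trans (hRD.trans hRE), fun k => ?_⟩
          by_cases hk0 : k = 0
          · subst hk0
            have : E 0 = C 0 + C i := by
              rw [hE, Matrix.updateRow_ne h0i, hD, Matrix.updateRow_self]
            simp [this, hCzero 0 h0i, hCi]
          · by_cases hki : k = i
            · subst hki
              have hD0 : D 0 = C 0 + C k := by rw [hD, Matrix.updateRow_self]
              have hDk : D k = C k := by rw [hD, Matrix.updateRow_ne h0]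
              have : E k = C k - (C 0 + C k) := by rw [hE, Matrix.updateRow_self, hD0, hDk]
              simp [this, hCzero 0 h0i, hk0]
            · have : E k = C k := by
                rw [hE, Matrix.updateRow_ne hki, hD, Matrix.updateRow_ne hk0]
              simp [this, hCzero k hki, hk0]

/-! ### Clearing the first row -/

lemma clear_lemma (s : Finset (Fin (n + 1))) (h0s : (0 : Fin (n + 1)) ∉ s) :
    ∀ C : Matrix (Fin (n + 1)) (Fin (n + 1)) ℤ, C 0 0 = 1 →
    (∀ i, i ≠ 0 → C i = (1 : Matrix (Fin (n + 1)) (Fin (n + 1)) ℤ) i) →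
    (∀ j, j ≠ 0 → j ∉ s → C 0 j = 0) → R (n + 1) C 1 := by
  induction s using Finset.induction_on with
  | empty =>
      intro C h00 hrows h0j
      have : C = 1 := by
        ext a b
        by_cases ha : a = 0
        · subst ha
          by_cases hb : b = 0
          · subst hb; simpa using h00
          · rw [h0j b hb (Finset.notMem_empty b)]
            simp [Matrix.one_apply, Ne.symm hb]
        · rw [hrows a ha]
      rw [this]
  | @insert a s ha ih =>
      intro C h00 hrows h0j
      have ha0 : a ≠ 0 := by
        rintro rfl
        exact h0s (Finset.mem_insert_self 0 s)
      have h0s' : (0 : Fin (n + 1)) ∉ s := fun h => h0s (Finset.mem_insert_of_mem h)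
      set D : Matrix (Fin (n + 1)) (Fin (n + 1)) ℤ :=
        C.updateRow 0 (C 0 + (-(C 0 a)) • C a) with hD
      have hRD : R (n + 1) C D := r_smul_add C ha0 (-(C 0 a))
      have hCa : C a = (1 : Matrix (Fin (n + 1)) (Fin (n + 1)) ℤ) a := hrows a ha0
      have hD0 : ∀ b, D 0 b = C 0 b - C 0 a * (1 : Matrix (Fin (n + 1)) (Fin (n + 1)) ℤ) a b := by
        intro b
        rw [hD, Matrix.updateRow_self]
        simp [hCa]
        ring
      refine hRD.trans (ih h0s' D ?_ ?_ ?_)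
      · rw [hD0 0, Matrix.one_apply_ne ha0]
        simpa using h00
      · intro i hi
        rw [hD, Matrix.updateRow_ne hi]
        exact hrows i hi
      · intro j hj hjs
        rw [hD0 j]
        by_cases hja : j = a
        · subst hja
          simp
        · rw [Matrix.one_apply_ne (Ne.symm hja)]
          have : j ∉ insert a s := by
            simp [hja, hjs]
          rw [h0j j hj this]
          ring

lemma main : ∀ (n : ℕ) (A : Matrix (Fin n) (Fin n) ℤ), IsUnit A.det → R n A 1 := by
  intro n
  induction n with
  | zero => intro A _; rw [Subsingleton.elim A 1]
  | succ n ih =>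
      intro A hA
      obtain ⟨B, hAB, hB⟩ := col_lemma (∑ i, (A i 0).natAbs) A le_rfl hA
      have hBdet : IsUnit B.det := r_det hAB hA
      set A' : Matrix (Fin n) (Fin n) ℤ := B.submatrix Fin.succ Fin.succ with hA'
      have hBeq : B = lift (B 0) A' := by
        ext a b
        cases a using Fin.cases with
        | zero => rw [lift_zero]
        | succ a =>
            rw [lift_succ]
            cases b using Fin.cases with
            | zero =>
                rw [Fin.cons_zero]
                rw [hB a.succ]
                simp [Fin.succ_ne_zero a]
            | succ b =>
                rw [Fin.cons_succ]
                rfl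
      have hdetA' : IsUnit A'.det := by
        have e : B.det = A'.det := by
          rw [Matrix.det_succ_column_zero]
          rw [Fintype.sum_eq_single (0 : Fin (n + 1)) (fun i hi => by
            rw [hB i]; simp [hi])]
          rw [hB 0]
          simp [Fin.succAbove_zero, hA']
        rwa [e] at hBdet
      have h1 : R (n + 1) B (lift (B 0) 1) := by
        conv_lhs => rw [hBeq]
        exact r_lift (B 0) (ih A' hdetA')
      have h2 : R (n + 1) (lift (B 0) 1) 1 := by
        refine clear_lemma (Finset.univ.erase 0) (Finset.notMem_erase 0 _)
          (lift (B 0) 1) ?_ ?_ ?_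
        · rw [lift_zero]
          simpa using hB 0
        · intro i hi
          obtain ⟨a, rfl⟩ : ∃ a : Fin n, i = a.succ := ⟨i.pred hi, (Fin.succ_pred i hi).symm⟩
          rw [lift_succ]
          funext b
          cases b using Fin.cases with
          | zero =>
              rw [Fin.cons_zero, Matrix.one_apply_ne (Fin.succ_ne_zero a)]
          | succ b =>
              rw [Fin.cons_succ]
              simp [Matrix.one_apply, Fin.succ_inj]
        · intro j hj hjs
          exfalso
          exact hjs (Finset.mem_erase.mpr ⟨hj, Finset.mem_univ j⟩)
      exact hAB.trans (h1.trans h2)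

end RowMoveAux

theorem stmt_7 (n : ℕ) (A : Matrix (Fin n) (Fin n) ℤ) (hA : IsUnit A.det) :
    Relation.ReflTransGen (RowMove n) 1 A :=
  RowMoveAux.r_symm (RowMoveAux.main n A hA)
end

section
/- The group GL(n, ℤ) is generated by the diagonal matrices obtained from the identity by negating one diagonal entry, together with the transvections I + E_{ij} for i ≠ j. -/
open Matrix Finset
namespace Stmt8
variable {n : ℕ}

def S (n : ℕ) : Set (Matrix.GeneralLinearGroup (Fin n) ℤ) :=
  {M | (∃ i, (M : Matrix (Fin n) (Fin n) ℤ) = 1 + Matrix.single i i (-2)) ∨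
       (∃ i j, i ≠ j ∧ (M : Matrix (Fin n) (Fin n) ℤ) = 1 + Matrix.single i j 1)}

def tv (i j : Fin n) (hij : i ≠ j) (c : ℤ) : Matrix.GeneralLinearGroup (Fin n) ℤ :=
  ⟨Matrix.transvection i j c, Matrix.transvection i j (-c), by
      rw [Matrix.transvection_mul_transvection_same _ _ hij]
      simp [Matrix.transvection_zero], by
      rw [Matrix.transvection_mul_transvection_same _ _ hij]
      simp [Matrix.transvection_zero]⟩

lemma dneg_aux (i : Fin n) :
    ((1 + Matrix.single i i (-2)) * (1 + Matrix.single i i (-2)) :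
      Matrix (Fin n) (Fin n) ℤ) = 1 := by
  rw [Matrix.mul_add, Matrix.add_mul, Matrix.add_mul, Matrix.one_mul, Matrix.mul_one,
    Matrix.single_mul_single_same]
  ext a b
  by_cases h : a = i <;> by_cases h' : b = i <;>
    simp [Matrix.single, Matrix.one_apply, h, h'] <;> ring_nf <;> omega

def dneg (i : Fin n) : Matrix.GeneralLinearGroup (Fin n) ℤ :=
  ⟨1 + Matrix.single i i (-2), 1 + Matrix.single i i (-2), dneg_aux i, dneg_aux i⟩

lemma dneg_mem (i : Fin n) : dneg i ∈ Subgroup.closure (S n) :=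
  Subgroup.subset_closure (Or.inl ⟨i, rfl⟩)

lemma tv_one_mem (i j : Fin n) (hij : i ≠ j) : tv i j hij 1 ∈ Subgroup.closure (S n) := by
  apply Subgroup.subset_closure
  right
  refine ⟨i, j, hij, ?_⟩
  show Matrix.transvection i j 1 = _
  simp [Matrix.transvection]

lemma tv_mul_tv (i j : Fin n) (hij : i ≠ j) (c d : ℤ) :
    tv i j hij c * tv i j hij d = tv i j hij (c + d) := by
  apply Units.ext
  show Matrix.transvection i j c * Matrix.transvection i j d = _
  rw [Matrix.transvection_mul_transvection_same _ _ hij]; rfl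

lemma tv_zero (i j : Fin n) (hij : i ≠ j) : tv i j hij 0 = 1 := by
  apply Units.ext
  show Matrix.transvection i j 0 = 1
  simp [Matrix.transvection_zero]

lemma tv_mem (i j : Fin n) (hij : i ≠ j) (c : ℤ) : tv i j hij c ∈ Subgroup.closure (S n) := by
  induction c using Int.induction_on with
  | zero => rw [tv_zero]; exact one_mem _
  | succ k ih =>
      have := Subgroup.mul_mem _ ih (tv_one_mem i j hij)
      rwa [tv_mul_tv] at this
  | pred k ih =>
      have hneg : tv i j hij (-1) ∈ Subgroup.closure (S n) := by
        have h1 := tv_one_mem i j hij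
        have : (tv i j hij 1)⁻¹ = tv i j hij (-1) := by
          rw [inv_eq_iff_mul_eq_one, tv_mul_tv]
          norm_num [tv_zero]
        rw [← this]
        exact Subgroup.inv_mem _ h1
      have := Subgroup.mul_mem _ ih hneg
      rwa [tv_mul_tv] at this

lemma mem_of_mul {E M : Matrix.GeneralLinearGroup (Fin n) ℤ}
    (hE : E ∈ Subgroup.closure (S n)) (h : E * M ∈ Subgroup.closure (S n)) :
    M ∈ Subgroup.closure (S n) := by
  have := Subgroup.mul_mem _ (Subgroup.inv_mem _ hE) h
  rwa [← mul_assoc, inv_mul_cancel, one_mul] at this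

lemma tv_mul_apply_same (i j : Fin n) (hij : i ≠ j) (c : ℤ)
    (M : Matrix.GeneralLinearGroup (Fin n) ℤ) (b : Fin n) :
    ((tv i j hij c * M : Matrix.GeneralLinearGroup (Fin n) ℤ) : Matrix (Fin n) (Fin n) ℤ) i b
      = (M : Matrix (Fin n) (Fin n) ℤ) i b + c * (M : Matrix (Fin n) (Fin n) ℤ) j b := by
  show (Matrix.transvection i j c * (M : Matrix (Fin n) (Fin n) ℤ)) i b = _
  exact Matrix.transvection_mul_apply_same i j b c _

lemma tv_mul_apply_ne (i j : Fin n) (hij : i ≠ j) (c : ℤ)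
    (M : Matrix.GeneralLinearGroup (Fin n) ℤ) (a b : Fin n) (ha : a ≠ i) :
    ((tv i j hij c * M : Matrix.GeneralLinearGroup (Fin n) ℤ) : Matrix (Fin n) (Fin n) ℤ) a b
      = (M : Matrix (Fin n) (Fin n) ℤ) a b := by
  show (Matrix.transvection i j c * (M : Matrix (Fin n) (Fin n) ℤ)) a b = _
  exact Matrix.transvection_mul_apply_of_ne i j a b ha c _

lemma dneg_mul_apply_same (i : Fin n) (M : Matrix.GeneralLinearGroup (Fin n) ℤ) (b : Fin n) :
    ((dneg i * M : Matrix.GeneralLinearGroup (Fin n) ℤ) : Matrix (Fin n) (Fin n) ℤ) i b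
      = -((M : Matrix (Fin n) (Fin n) ℤ) i b) := by
  show (((1 + Matrix.single i i (-2)) : Matrix (Fin n) (Fin n) ℤ) * (M : Matrix (Fin n) (Fin n) ℤ)) i b = _
  rw [Matrix.add_mul, Matrix.one_mul, Matrix.add_apply, Matrix.single_mul_apply_same]
  ring

lemma dneg_mul_apply_ne (i : Fin n) (M : Matrix.GeneralLinearGroup (Fin n) ℤ) (a b : Fin n)
    (ha : a ≠ i) :
    ((dneg i * M : Matrix.GeneralLinearGroup (Fin n) ℤ) : Matrix (Fin n) (Fin n) ℤ) a b
      = (M : Matrix (Fin n) (Fin n) ℤ) a b := by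
  show (((1 + Matrix.single i i (-2)) : Matrix (Fin n) (Fin n) ℤ) * (M : Matrix (Fin n) (Fin n) ℤ)) a b = _
  rw [Matrix.add_mul, Matrix.one_mul, Matrix.add_apply,
    Matrix.single_mul_apply_of_ne (c := -2) i i a b ha]
  ring

lemma inv_cols (M : Matrix.GeneralLinearGroup (Fin n) ℤ) (k : ℕ)
    (hcols : ∀ i j : Fin n, (j:ℕ) < k →
      (M : Matrix (Fin n) (Fin n) ℤ) i j = (1 : Matrix (Fin n) (Fin n) ℤ) i j) :
    ∀ i j : Fin n, (j:ℕ) < k →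
      ((M⁻¹ : Matrix.GeneralLinearGroup (Fin n) ℤ) : Matrix (Fin n) (Fin n) ℤ) i j
        = (1 : Matrix (Fin n) (Fin n) ℤ) i j := by
  intro i j hj
  set N : Matrix (Fin n) (Fin n) ℤ := ((M⁻¹ : Matrix.GeneralLinearGroup (Fin n) ℤ) :
    Matrix (Fin n) (Fin n) ℤ) with hN
  have h1 : N * (M : Matrix (Fin n) (Fin n) ℤ) = 1 := Units.inv_mul M
  calc N i j = (N * (1 : Matrix (Fin n) (Fin n) ℤ)) i j := by rw [Matrix.mul_one]
    _ = ∑ l, N i l * (1 : Matrix (Fin n) (Fin n) ℤ) l j := Matrix.mul_apply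
    _ = ∑ l, N i l * (M : Matrix (Fin n) (Fin n) ℤ) l j := by
        refine Finset.sum_congr rfl fun l _ => ?_
        rw [hcols l j hj]
    _ = (N * (M : Matrix (Fin n) (Fin n) ℤ)) i j := (Matrix.mul_apply).symm
    _ = (1 : Matrix (Fin n) (Fin n) ℤ) i j := by rw [h1]

lemma pivot_sum (M : Matrix.GeneralLinearGroup (Fin n) ℤ) (k : ℕ) (hk : k < n)
    (hcols : ∀ i j : Fin n, (j:ℕ) < k →
      (M : Matrix (Fin n) (Fin n) ℤ) i j = (1 : Matrix (Fin n) (Fin n) ℤ) i j) :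
    ∑ j ∈ univ.filter (fun j : Fin n => k ≤ (j:ℕ)),
      ((M⁻¹ : Matrix.GeneralLinearGroup (Fin n) ℤ) : Matrix (Fin n) (Fin n) ℤ) ⟨k, hk⟩ j *
        (M : Matrix (Fin n) (Fin n) ℤ) j ⟨k, hk⟩ = 1 := by
  set kk : Fin n := ⟨k, hk⟩ with hkk
  set N : Matrix (Fin n) (Fin n) ℤ := ((M⁻¹ : Matrix.GeneralLinearGroup (Fin n) ℤ) :
    Matrix (Fin n) (Fin n) ℤ) with hN
  have h1 : N * (M : Matrix (Fin n) (Fin n) ℤ) = 1 := Units.inv_mul M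
  have h2 : ∑ j, N kk j * (M : Matrix (Fin n) (Fin n) ℤ) j kk = 1 := by
    rw [← Matrix.mul_apply, h1, Matrix.one_apply_eq]
  rw [← Finset.sum_filter_add_sum_filter_not univ (fun j : Fin n => k ≤ (j:ℕ))] at h2
  have hz : ∑ j ∈ univ.filter (fun j : Fin n => ¬ k ≤ (j:ℕ)),
      N kk j * (M : Matrix (Fin n) (Fin n) ℤ) j kk = 0 := by
    refine Finset.sum_eq_zero fun j hj => ?_
    simp only [Finset.mem_filter, Finset.mem_univ, true_and, not_le] at hj
    have hNj : N kk j = 0 := by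
      have := inv_cols M k hcols kk j hj
      rw [Matrix.one_apply_ne (Fin.ne_of_val_ne (show k ≠ (j:ℕ) by omega))] at this
      exact this
    rw [hNj, zero_mul]
  rw [hz, add_zero] at h2
  exact h2

lemma int_step (a b : ℤ) (hb : b ≠ 0) (h : b.natAbs ≤ a.natAbs) :
    ∃ c : ℤ, (a + c * b).natAbs < a.natAbs := by
  by_cases hs : (0 ≤ a ∧ 0 ≤ b) ∨ (a ≤ 0 ∧ b ≤ 0)
  · exact ⟨-1, by omega⟩
  · exact ⟨1, by omega⟩


lemma clear (k : ℕ) (hk : k < n)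
    (IH : ∀ M : Matrix.GeneralLinearGroup (Fin n) ℤ,
      (∀ i j : Fin n, (j:ℕ) < k + 1 →
        (M : Matrix (Fin n) (Fin n) ℤ) i j = (1 : Matrix (Fin n) (Fin n) ℤ) i j) →
      M ∈ Subgroup.closure (S n)) :
    ∀ c : ℕ, ∀ M : Matrix.GeneralLinearGroup (Fin n) ℤ,
      (∀ i j : Fin n, (j:ℕ) < k →
        (M : Matrix (Fin n) (Fin n) ℤ) i j = (1 : Matrix (Fin n) (Fin n) ℤ) i j) →
      (M : Matrix (Fin n) (Fin n) ℤ) ⟨k, hk⟩ ⟨k, hk⟩ = 1 →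
      (∀ i : Fin n, i ≠ ⟨k, hk⟩ → k ≤ (i:ℕ) →
        (M : Matrix (Fin n) (Fin n) ℤ) i ⟨k, hk⟩ = 0) →
      (∑ i ∈ univ.filter (fun i : Fin n => i ≠ ⟨k, hk⟩),
        ((M : Matrix (Fin n) (Fin n) ℤ) i ⟨k, hk⟩).natAbs) ≤ c →
      M ∈ Subgroup.closure (S n) := by
  intro c
  induction c with
  | zero =>
      intro M hcols hpiv _hz hsum
      have hzero : ∀ i : Fin n, i ≠ ⟨k, hk⟩ →
          (M : Matrix (Fin n) (Fin n) ℤ) i ⟨k, hk⟩ = 0 := by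
        intro i hi
        have h0 : ((M : Matrix (Fin n) (Fin n) ℤ) i ⟨k, hk⟩).natAbs = 0 := by
          have := Finset.sum_eq_zero_iff.mp (Nat.le_zero.mp hsum) i
            (by simp [Finset.mem_filter, hi])
          exact this
        exact Int.natAbs_eq_zero.mp h0
      refine IH M ?_
      intro i j hj
      rcases Nat.lt_or_ge (j:ℕ) k with hjk | hjk
      · exact hcols i j hjk
      · have hjeq : j = ⟨k, hk⟩ := Fin.ext (show (j:ℕ) = k by omega)
        subst hjeq
        by_cases hi : i = ⟨k, hk⟩
        · subst hi; rw [hpiv, Matrix.one_apply_eq]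
        · rw [hzero i hi, Matrix.one_apply_ne hi]
  | succ c ihc =>
      intro M hcols hpiv hz hsum
      by_cases hex : ∃ i : Fin n, i ≠ ⟨k, hk⟩ ∧ (M : Matrix (Fin n) (Fin n) ℤ) i ⟨k, hk⟩ ≠ 0
      · obtain ⟨i, hik, hi0⟩ := hex
        set kk : Fin n := ⟨k, hk⟩
        set b : ℤ := (M : Matrix (Fin n) (Fin n) ℤ) i kk with hb
        refine mem_of_mul (tv_mem i kk hik (-b)) ?_
        set M' := tv i kk hik (-b) * M with hM'
        have hrow : ∀ x y : Fin n, x ≠ i →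
            (M' : Matrix (Fin n) (Fin n) ℤ) x y = (M : Matrix (Fin n) (Fin n) ℤ) x y :=
          fun x y hx => tv_mul_apply_ne i kk hik (-b) M x y hx
        have hrowi : ∀ y : Fin n, (M' : Matrix (Fin n) (Fin n) ℤ) i y
            = (M : Matrix (Fin n) (Fin n) ℤ) i y + (-b) * (M : Matrix (Fin n) (Fin n) ℤ) kk y :=
          fun y => tv_mul_apply_same i kk hik (-b) M y
        refine ihc M' ?_ ?_ ?_ ?_
        · intro x j hj
          by_cases hx : x = i
          · subst hx
            rw [hrowi j, hcols x j hj, hcols kk j hj,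
              show (1 : Matrix (Fin n) (Fin n) ℤ) kk j = 0 from
                Matrix.one_apply_ne (Fin.ne_of_val_ne (show k ≠ (j:ℕ) by omega))]
            ring
          · rw [hrow x j hx]; exact hcols x j hj
        · rw [hrow kk kk (Ne.symm hik)]; exact hpiv
        · intro x hx hkx
          by_cases hxi : x = i
          · subst hxi
            rw [hrowi kk, hpiv, ← hb]; ring
          · rw [hrow x kk hxi]; exact hz x hx hkx
        · have hlt : (∑ x ∈ univ.filter (fun x : Fin n => x ≠ kk),
              ((M' : Matrix (Fin n) (Fin n) ℤ) x kk).natAbs)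
              < (∑ x ∈ univ.filter (fun x : Fin n => x ≠ kk),
              ((M : Matrix (Fin n) (Fin n) ℤ) x kk).natAbs) := by
            refine Finset.sum_lt_sum (fun x hx => ?_) ⟨i, by simp [Finset.mem_filter, hik], ?_⟩
            · by_cases hxi : x = i
              · subst hxi
                rw [hrowi kk, hpiv, ← hb]
                simp
              · rw [hrow x kk hxi]
            · rw [hrowi kk, hpiv, ← hb]
              have : b + -b * 1 = 0 := by ring
              rw [this]
              simpa using Int.natAbs_pos.mpr hi0
          omega
      · push_neg at hex
        refine ihc M hcols hpiv hz ?_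
        have : (∑ i ∈ univ.filter (fun i : Fin n => i ≠ ⟨k, hk⟩),
            ((M : Matrix (Fin n) (Fin n) ℤ) i ⟨k, hk⟩).natAbs) = 0 := by
          refine Finset.sum_eq_zero fun x hx => ?_
          simp only [Finset.mem_filter, Finset.mem_univ, true_and] at hx
          rw [hex x hx]
          rfl
        omega


lemma euclid (k : ℕ) (hk : k < n)
    (IH : ∀ M : Matrix.GeneralLinearGroup (Fin n) ℤ,
      (∀ i j : Fin n, (j:ℕ) < k + 1 →
        (M : Matrix (Fin n) (Fin n) ℤ) i j = (1 : Matrix (Fin n) (Fin n) ℤ) i j) →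
      M ∈ Subgroup.closure (S n)) :
    ∀ s : ℕ, ∀ M : Matrix.GeneralLinearGroup (Fin n) ℤ,
      (∀ i j : Fin n, (j:ℕ) < k →
        (M : Matrix (Fin n) (Fin n) ℤ) i j = (1 : Matrix (Fin n) (Fin n) ℤ) i j) →
      (∑ i ∈ univ.filter (fun i : Fin n => k ≤ (i:ℕ)),
        ((M : Matrix (Fin n) (Fin n) ℤ) i ⟨k, hk⟩).natAbs) ≤ s →
      M ∈ Subgroup.closure (S n) := by
  intro s
  induction s with
  | zero =>
      intro M hcols hsum
      exfalso
      have key := pivot_sum M k hk hcols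
      by_cases hex : ∃ j ∈ univ.filter (fun j : Fin n => k ≤ (j:ℕ)),
          (M : Matrix (Fin n) (Fin n) ℤ) j ⟨k, hk⟩ ≠ 0
      · obtain ⟨j, hjF, hj0⟩ := hex
        have h1 : 1 ≤ ((M : Matrix (Fin n) (Fin n) ℤ) j ⟨k, hk⟩).natAbs :=
          Int.natAbs_pos.mpr hj0
        have h2 : ((M : Matrix (Fin n) (Fin n) ℤ) j ⟨k, hk⟩).natAbs ≤
            (∑ i ∈ univ.filter (fun i : Fin n => k ≤ (i:ℕ)),
              ((M : Matrix (Fin n) (Fin n) ℤ) i ⟨k, hk⟩).natAbs) :=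
          Finset.single_le_sum
            (f := fun i => ((M : Matrix (Fin n) (Fin n) ℤ) i ⟨k, hk⟩).natAbs)
            (fun _ _ => Nat.zero_le _) hjF
        omega
      · push_neg at hex
        have : (∑ j ∈ univ.filter (fun j : Fin n => k ≤ (j:ℕ)),
            ((M⁻¹ : Matrix.GeneralLinearGroup (Fin n) ℤ) : Matrix (Fin n) (Fin n) ℤ) ⟨k, hk⟩ j *
              (M : Matrix (Fin n) (Fin n) ℤ) j ⟨k, hk⟩) = 0 :=
          Finset.sum_eq_zero fun j hj => by rw [hex j hj, mul_zero]
        rw [this] at key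
        exact zero_ne_one key
  | succ s ihs =>
      intro M hcols hsum
      have key := pivot_sum M k hk hcols
      have hex : ∃ j ∈ univ.filter (fun j : Fin n => k ≤ (j:ℕ)),
          (M : Matrix (Fin n) (Fin n) ℤ) j ⟨k, hk⟩ ≠ 0 := by
        by_contra hc
        push_neg at hc
        have : (∑ j ∈ univ.filter (fun j : Fin n => k ≤ (j:ℕ)),
            ((M⁻¹ : Matrix.GeneralLinearGroup (Fin n) ℤ) : Matrix (Fin n) (Fin n) ℤ) ⟨k, hk⟩ j *
              (M : Matrix (Fin n) (Fin n) ℤ) j ⟨k, hk⟩) = 0 :=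
          Finset.sum_eq_zero fun j hj => by rw [hc j hj, mul_zero]
        rw [this] at key
        exact zero_ne_one key
      by_cases htwo : ∃ j1 ∈ univ.filter (fun j : Fin n => k ≤ (j:ℕ)),
          ∃ j2 ∈ univ.filter (fun j : Fin n => k ≤ (j:ℕ)), j1 ≠ j2 ∧
          (M : Matrix (Fin n) (Fin n) ℤ) j1 ⟨k, hk⟩ ≠ 0 ∧
          (M : Matrix (Fin n) (Fin n) ℤ) j2 ⟨k, hk⟩ ≠ 0
      · -- two nonzero entries: Euclidean step
        have step : ∀ a b : Fin n, a ∈ univ.filter (fun j : Fin n => k ≤ (j:ℕ)) →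
            b ∈ univ.filter (fun j : Fin n => k ≤ (j:ℕ)) → a ≠ b →
            (M : Matrix (Fin n) (Fin n) ℤ) a ⟨k, hk⟩ ≠ 0 →
            (M : Matrix (Fin n) (Fin n) ℤ) b ⟨k, hk⟩ ≠ 0 →
            ((M : Matrix (Fin n) (Fin n) ℤ) b ⟨k, hk⟩).natAbs ≤
              ((M : Matrix (Fin n) (Fin n) ℤ) a ⟨k, hk⟩).natAbs →
            M ∈ Subgroup.closure (S n) := by
          intro a b haF hbF hab ha0 hb0 hle
          obtain ⟨c, hc⟩ := int_step _ _ hb0 hle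
          refine mem_of_mul (tv_mem a b hab c) (ihs (tv a b hab c * M) ?_ ?_)
          · intro x j hj
            by_cases hx : x = a
            · rw [hx, tv_mul_apply_same a b hab c M j, hcols a j hj, hcols b j hj,
                show (1 : Matrix (Fin n) (Fin n) ℤ) b j = 0 from
                  Matrix.one_apply_ne (Fin.ne_of_val_ne (show (b:ℕ) ≠ (j:ℕ) by
                    have := (Finset.mem_filter.mp hbF).2; omega))]
              ring
            · rw [tv_mul_apply_ne a b hab c M x j hx]; exact hcols x j hj
          · have hlt : (∑ x ∈ univ.filter (fun x : Fin n => k ≤ (x:ℕ)),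
                (((tv a b hab c * M : Matrix.GeneralLinearGroup (Fin n) ℤ) :
                  Matrix (Fin n) (Fin n) ℤ) x ⟨k, hk⟩).natAbs)
                < (∑ x ∈ univ.filter (fun x : Fin n => k ≤ (x:ℕ)),
                (((M : Matrix.GeneralLinearGroup (Fin n) ℤ) :
                  Matrix (Fin n) (Fin n) ℤ) x ⟨k, hk⟩).natAbs) := by
              refine Finset.sum_lt_sum (fun x hx => ?_) ⟨a, haF, ?_⟩
              · by_cases hxa : x = a
                · rw [hxa, tv_mul_apply_same a b hab c M]
                  exact le_of_lt hc
                · rw [tv_mul_apply_ne a b hab c M x _ hxa]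
              · rw [tv_mul_apply_same a b hab c M]
                exact hc
            omega
        obtain ⟨j1, hj1F, j2, hj2F, hne, h1, h2⟩ := htwo
        rcases le_total
            (((M : Matrix (Fin n) (Fin n) ℤ) j2 ⟨k, hk⟩).natAbs)
            (((M : Matrix (Fin n) (Fin n) ℤ) j1 ⟨k, hk⟩).natAbs) with hle | hle
        · exact step j1 j2 hj1F hj2F hne h1 h2 hle
        · exact step j2 j1 hj2F hj1F (Ne.symm hne) h2 h1 hle
      · -- single nonzero entry: it is a unit
        push_neg at htwo
        obtain ⟨j0, hj0F, hj00⟩ := hex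
        have hj0k : k ≤ (j0:ℕ) := (Finset.mem_filter.mp hj0F).2
        have hothers : ∀ j ∈ univ.filter (fun j : Fin n => k ≤ (j:ℕ)), j ≠ j0 →
            (M : Matrix (Fin n) (Fin n) ℤ) j ⟨k, hk⟩ = 0 := fun j hj hne =>
          htwo j0 hj0F j hj (Ne.symm hne) hj00
        have hsingle : (∑ j ∈ univ.filter (fun j : Fin n => k ≤ (j:ℕ)),
            ((M⁻¹ : Matrix.GeneralLinearGroup (Fin n) ℤ) : Matrix (Fin n) (Fin n) ℤ) ⟨k, hk⟩ j *
              (M : Matrix (Fin n) (Fin n) ℤ) j ⟨k, hk⟩)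
            = ((M⁻¹ : Matrix.GeneralLinearGroup (Fin n) ℤ) : Matrix (Fin n) (Fin n) ℤ) ⟨k, hk⟩ j0 *
              (M : Matrix (Fin n) (Fin n) ℤ) j0 ⟨k, hk⟩ :=
          Finset.sum_eq_single_of_mem j0 hj0F fun j hj hne => by
            rw [hothers j hj hne, mul_zero]
        rw [hsingle] at key
        have haunit : (M : Matrix (Fin n) (Fin n) ℤ) j0 ⟨k, hk⟩ = 1 ∨
            (M : Matrix (Fin n) (Fin n) ℤ) j0 ⟨k, hk⟩ = -1 :=
          Int.isUnit_iff.mp (IsUnit.of_mul_eq_one _ (by rw [mul_comm]; exact key))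
        have hkkF : (⟨k, hk⟩ : Fin n) ∈ univ.filter (fun j : Fin n => k ≤ (j:ℕ)) := by
          simp
        by_cases hj0kk : j0 = ⟨k, hk⟩
        · rcases haunit with hpe | hpe
          · refine clear k hk IH _ M hcols ?_ ?_ le_rfl
            · rw [hj0kk] at hpe; exact hpe
            · intro i hikk hki
              exact hothers i (by simp [hki]) (by rw [hj0kk]; exact hikk)
          · rw [hj0kk] at hpe
            refine mem_of_mul (dneg_mem ⟨k, hk⟩) (clear k hk IH _ (dneg ⟨k, hk⟩ * M) ?_ ?_ ?_ le_rfl)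
            · intro x j hj
              by_cases hx : x = ⟨k, hk⟩
              · rw [hx, dneg_mul_apply_same ⟨k, hk⟩ M j, hcols ⟨k, hk⟩ j hj,
                  show (1 : Matrix (Fin n) (Fin n) ℤ) ⟨k, hk⟩ j = 0 from
                    Matrix.one_apply_ne (Fin.ne_of_val_ne (show k ≠ (j:ℕ) by omega))]
                ring
              · rw [dneg_mul_apply_ne _ M x j hx]; exact hcols x j hj
            · rw [dneg_mul_apply_same _ M, hpe]; ring
            · intro i hikk hki
              rw [dneg_mul_apply_ne _ M i _ hikk]
              exact hothers i (by simp [hki]) (by rw [hj0kk]; exact hikk)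
        · -- pivot is elsewhere: move it to the diagonal
          have hkkj0 : (⟨k, hk⟩ : Fin n) ≠ j0 := Ne.symm hj0kk
          have hMkk : (M : Matrix (Fin n) (Fin n) ℤ) ⟨k, hk⟩ ⟨k, hk⟩ = 0 :=
            hothers _ hkkF hkkj0
          set a : ℤ := (M : Matrix (Fin n) (Fin n) ℤ) j0 ⟨k, hk⟩ with hadef
          set M1 := tv ⟨k, hk⟩ j0 hkkj0 a * M with hM1
          set M2 := tv j0 ⟨k, hk⟩ hj0kk (-a) * M1 with hM2
          have hM1row : ∀ y, (M1 : Matrix (Fin n) (Fin n) ℤ) ⟨k, hk⟩ y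
              = (M : Matrix (Fin n) (Fin n) ℤ) ⟨k, hk⟩ y +
                a * (M : Matrix (Fin n) (Fin n) ℤ) j0 y :=
            fun y => tv_mul_apply_same _ j0 hkkj0 a M y
          have hM1ne : ∀ x y, x ≠ ⟨k, hk⟩ → (M1 : Matrix (Fin n) (Fin n) ℤ) x y
              = (M : Matrix (Fin n) (Fin n) ℤ) x y :=
            fun x y hx => tv_mul_apply_ne _ j0 hkkj0 a M x y hx
          have hM2row : ∀ y, (M2 : Matrix (Fin n) (Fin n) ℤ) j0 y
              = (M1 : Matrix (Fin n) (Fin n) ℤ) j0 y +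
                (-a) * (M1 : Matrix (Fin n) (Fin n) ℤ) ⟨k, hk⟩ y :=
            fun y => tv_mul_apply_same j0 _ hj0kk (-a) M1 y
          have hM2ne : ∀ x y, x ≠ j0 → (M2 : Matrix (Fin n) (Fin n) ℤ) x y
              = (M1 : Matrix (Fin n) (Fin n) ℤ) x y :=
            fun x y hx => tv_mul_apply_ne j0 _ hj0kk (-a) M1 x y hx
          have haa : a * a = 1 := by
            rcases haunit with h | h <;> rw [h] <;> norm_num
          have hM1piv : (M1 : Matrix (Fin n) (Fin n) ℤ) ⟨k, hk⟩ ⟨k, hk⟩ = 1 := by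
            rw [hM1row, hMkk, ← hadef, haa]; ring
          refine mem_of_mul (tv_mem _ j0 hkkj0 a)
            (mem_of_mul (tv_mem j0 _ hj0kk (-a)) (clear k hk IH _ M2 ?_ ?_ ?_ le_rfl))
          · intro x j hj
            by_cases hxj0 : x = j0
            · rw [hxj0, hM2row j, hM1ne j0 j hj0kk, hM1row j, hcols j0 j hj, hcols ⟨k, hk⟩ j hj,
                show (1 : Matrix (Fin n) (Fin n) ℤ) ⟨k, hk⟩ j = 0 from
                  Matrix.one_apply_ne (Fin.ne_of_val_ne (show k ≠ (j:ℕ) by omega)),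
                show (1 : Matrix (Fin n) (Fin n) ℤ) j0 j = 0 from
                  Matrix.one_apply_ne (Fin.ne_of_val_ne (show (j0:ℕ) ≠ (j:ℕ) by omega))]
              ring
            · rw [hM2ne x j hxj0]
              by_cases hxkk : x = ⟨k, hk⟩
              · rw [hxkk, hM1row j, hcols ⟨k, hk⟩ j hj, hcols j0 j hj,
                  show (1 : Matrix (Fin n) (Fin n) ℤ) j0 j = 0 from
                    Matrix.one_apply_ne (Fin.ne_of_val_ne (show (j0:ℕ) ≠ (j:ℕ) by omega))]
                ring
              · rw [hM1ne x j hxkk]; exact hcols x j hj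
          · rw [hM2ne _ _ hkkj0]; exact hM1piv
          · intro i hikk hki
            by_cases hij0 : i = j0
            · rw [hij0, hM2row, hM1ne j0 _ hj0kk, hM1piv, ← hadef]
              ring
            · rw [hM2ne i _ hij0, hM1ne i _ hikk]
              exact hothers i (by simp [hki]) hij0


lemma main : ∀ fuel k : ℕ, n ≤ k + fuel →
    ∀ M : Matrix.GeneralLinearGroup (Fin n) ℤ,
      (∀ i j : Fin n, (j:ℕ) < k →
        (M : Matrix (Fin n) (Fin n) ℤ) i j = (1 : Matrix (Fin n) (Fin n) ℤ) i j) →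
      M ∈ Subgroup.closure (S n) := by
  intro fuel
  induction fuel with
  | zero =>
      intro k hkn M hcols
      have : M = 1 := by
        apply Units.ext
        ext i j
        exact hcols i j (by omega)
      rw [this]; exact one_mem _
  | succ f ihf =>
      intro k hkn M hcols
      by_cases hkn' : k < n
      · exact euclid k hkn' (fun M' h => ihf (k + 1) (by omega) M' h) _ M hcols le_rfl
      · have : M = 1 := by
          apply Units.ext
          ext i j
          exact hcols i j (by omega)
        rw [this]; exact one_mem _

end Stmt8

theorem stmt_8 (n : ℕ) :
    Subgroup.closure
      {M : Matrix.GeneralLinearGroup (Fin n) ℤ |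
        (∃ i, (M : Matrix (Fin n) (Fin n) ℤ) = 1 + Matrix.single i i (-2)) ∨
        (∃ i j, i ≠ j ∧ (M : Matrix (Fin n) (Fin n) ℤ) = 1 + Matrix.single i j 1)} = ⊤ := by
  rw [eq_top_iff]
  intro M _
  exact Stmt8.main n 0 (by omega) M (fun i j hj => absurd hj (Nat.not_lt_zero _))
end

section
/- For any unimodular n × n integer matrix A, there exist words r₁,…,rₙ in the free group on n generators whose exponent-sum matrix is A and such that the group they present is trivial. -/
open Matrix

inductive Reach : {n : ℕ} → Matrix (Fin n) (Fin n) ℤ → Prop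
  | one {n} : Reach (1 : Matrix (Fin n) (Fin n) ℤ)
  | neg {n} {A : Matrix (Fin n) (Fin n) ℤ} (i : Fin n) (h : Reach A) :
      Reach (A.updateRow i (-(A i)))
  | add {n} {A : Matrix (Fin n) (Fin n) ℤ} (c : ℤ) {i j : Fin n} (hij : i ≠ j) (h : Reach A) :
      Reach (A.updateRow i (A i + c • A j))
  | swap {n} {A : Matrix (Fin n) (Fin n) ℤ} (i j : Fin n) (h : Reach A) :
      Reach (fun k => A (Equiv.swap i j k))

lemma reach_of_neg {n : ℕ} {A : Matrix (Fin n) (Fin n) ℤ} (i : Fin n)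
    (h : Reach (A.updateRow i (-(A i)))) : Reach A := by
  have := Reach.neg i h
  convert this using 1
  funext k
  by_cases hk : k = i
  · subst hk; simp
  · simp [Matrix.updateRow_ne hk]

lemma reach_of_add {n : ℕ} {A : Matrix (Fin n) (Fin n) ℤ} (c : ℤ) {i j : Fin n} (hij : i ≠ j)
    (h : Reach (A.updateRow i (A i + c • A j))) : Reach A := by
  have := Reach.add (-c) hij h
  convert this using 1
  funext k
  by_cases hk : k = i
  · subst hk
    rw [Matrix.updateRow_self, Matrix.updateRow_ne (Ne.symm hij), Matrix.updateRow_self]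
    simp
  · simp [Matrix.updateRow_ne hk]

lemma reach_of_swap {n : ℕ} {A : Matrix (Fin n) (Fin n) ℤ} (i j : Fin n)
    (h : Reach (fun k => A (Equiv.swap i j k))) : Reach A := by
  have := Reach.swap i j h
  convert this using 1
  refine iff_of_eq (congrArg Reach ?_)
  funext k
  simp

lemma reach_add_sum {n : ℕ} {A : Matrix (Fin n) (Fin n) ℤ} (i : Fin n)
    (h : Reach A) (c : Fin n → ℤ) (hc : c i = 0) :
    Reach (A.updateRow i (A i + ∑ j, c j • A j)) := by
  have key : ∀ s : Finset (Fin n), i ∉ s →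
      Reach (A.updateRow i (A i + ∑ j ∈ s, c j • A j)) := by
    intro s
    induction s using Finset.induction with
    | empty => intro _; simpa using h
    | @insert a s ha IH =>
      intro hins
      have hia : i ≠ a := fun e => hins (e ▸ Finset.mem_insert_self a s)
      have his : i ∉ s := fun e => hins (Finset.mem_insert_of_mem e)
      have := Reach.add (c a) hia (IH his)
      convert this using 1
      funext k
      by_cases hk : k = i
      · subst hk
        simp only [Matrix.updateRow_self, Matrix.updateRow_ne (Ne.symm hia),
          Finset.sum_insert ha]
        abel
      · simp only [Matrix.updateRow_ne hk]
  have := key (Finset.univ.erase i) (Finset.notMem_erase i _)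
  convert this using 3
  rw [Finset.sum_erase]
  simp [hc]

/-- Lift an `n × n` matrix to an `(n+1) × (n+1)` block matrix `[[1,0],[0,C]]`. -/
def liftMat {n : ℕ} (C : Matrix (Fin n) (Fin n) ℤ) : Matrix (Fin (n+1)) (Fin (n+1)) ℤ :=
  Matrix.of (Fin.cons (Fin.cons 1 0) (fun i => Fin.cons 0 (C i)))

lemma reach_liftMat {n : ℕ} {C : Matrix (Fin n) (Fin n) ℤ} (h : Reach C) :
    Reach (liftMat C) := by
  induction h with
  | one =>
    have : liftMat (1 : Matrix (Fin n) (Fin n) ℤ) = 1 := by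
      funext i j
      refine Fin.cases ?_ (fun i' => ?_) i <;> refine Fin.cases ?_ (fun j' => ?_) j <;>
        simp [liftMat, Matrix.one_apply, Fin.succ_ne_zero, eq_comm]
    rw [this]; exact Reach.one
  | @neg A i hA IH =>
    have := Reach.neg i.succ IH
    convert this using 1
    funext k
    refine Fin.cases ?_ (fun k' => ?_) k
    · rw [Matrix.updateRow_ne (Fin.succ_ne_zero i).symm]
      rfl
    · by_cases hk : k' = i
      · subst hk
        rw [Matrix.updateRow_self]
        funext l
        refine Fin.cases ?_ (fun l' => ?_) l <;>
          simp [liftMat, Matrix.updateRow_self]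
      · rw [Matrix.updateRow_ne (fun e => hk (Fin.succ_injective _ e))]
        funext l
        refine Fin.cases ?_ (fun l' => ?_) l <;>
          simp [liftMat, Matrix.updateRow_ne hk]
  | @add A c i j hij hA IH =>
    have := Reach.add c (i := i.succ) (j := j.succ) (fun e => hij (Fin.succ_injective _ e)) IH
    convert this using 1
    funext k
    refine Fin.cases ?_ (fun k' => ?_) k
    · rw [Matrix.updateRow_ne (Fin.succ_ne_zero i).symm]
      rfl
    · by_cases hk : k' = i
      · subst hk
        rw [Matrix.updateRow_self]
        funext l
        refine Fin.cases ?_ (fun l' => ?_) l <;>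
          simp [liftMat, Matrix.updateRow_self]
      · rw [Matrix.updateRow_ne (fun e => hk (Fin.succ_injective _ e))]
        funext l
        refine Fin.cases ?_ (fun l' => ?_) l <;>
          simp [liftMat, Matrix.updateRow_ne hk]
  | @swap A i j hA IH =>
    have := Reach.swap i.succ j.succ IH
    convert this using 1
    refine iff_of_eq (congrArg Reach ?_)
    funext k
    refine Fin.cases ?_ (fun k' => ?_) k
    · have h0 : Equiv.swap i.succ j.succ 0 = 0 :=
        Equiv.swap_apply_of_ne_of_ne (Fin.succ_ne_zero i).symm (Fin.succ_ne_zero j).symm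
      rw [h0]; rfl
    · have hs : Equiv.swap i.succ j.succ k'.succ = (Equiv.swap i j k').succ :=
        (Fin.succ_injective _) |>.swap_apply i j k'
      rw [hs]; rfl

lemma phaseB {n : ℕ} (B : Matrix (Fin (n+1)) (Fin (n+1)) ℤ) (hB : IsUnit B.det)
    (h1 : B 0 0 = 1) (h0 : ∀ k, k ≠ 0 → B k 0 = 0)
    (IH : ∀ C : Matrix (Fin n) (Fin n) ℤ, IsUnit C.det → Reach C) : Reach B := by
  set C : Matrix (Fin n) (Fin n) ℤ := B.submatrix Fin.succ Fin.succ with hC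
  have hdet : B.det = C.det := by
    rw [Matrix.det_succ_column_zero]
    rw [Finset.sum_eq_single 0]
    · simp [h1, Fin.succAbove_zero, hC]
    · intro k _ hk
      rw [h0 k hk]; ring
    · simp
  have hCdet : IsUnit C.det := hdet ▸ hB
  have hreachC := IH C hCdet
  have hD := reach_liftMat hreachC
  haveI : Invertible C := C.invertibleOfIsUnitDet hCdet
  set v : Fin n → ℤ := fun j => B 0 j.succ with hv
  set c' : Fin n → ℤ := Matrix.vecMul v (⅟C) with hc'
  have hvc : Matrix.vecMul c' C = v := by
    rw [hc', Matrix.vecMul_vecMul, invOf_mul_self, Matrix.vecMul_one]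
  set c : Fin (n+1) → ℤ := Fin.cons 0 c' with hc
  have := reach_add_sum (0 : Fin (n+1)) hD c (by simp [hc])
  convert this using 1
  funext k
  refine Fin.cases ?_ (fun k' => ?_) k
  · rw [Matrix.updateRow_self]
    funext l
    refine Fin.cases ?_ (fun l' => ?_) l
    · simp [liftMat, hc, h1, Fin.sum_univ_succ]
    · have : (∑ j, c j • (liftMat C) j) l'.succ = Matrix.vecMul c' C l' := by
        rw [Fin.sum_univ_succ]
        simp [liftMat, hc, Matrix.vecMul, dotProduct, mul_comm]
      simp only [Pi.add_apply, this, hvc]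
      simp [liftMat, hv]
  · rw [Matrix.updateRow_ne (Fin.succ_ne_zero k')]
    funext l
    refine Fin.cases ?_ (fun l' => ?_) l
    · simp [liftMat, h0 k'.succ (Fin.succ_ne_zero k')]
    · simp [liftMat, hC]

lemma reduced_case {n : ℕ} (A : Matrix (Fin (n+1)) (Fin (n+1)) ℤ) (i : Fin (n+1))
    (hA : IsUnit A.det) (h1 : A i 0 = 1) (h0 : ∀ k, k ≠ i → A k 0 = 0)
    (IH : ∀ C : Matrix (Fin n) (Fin n) ℤ, IsUnit C.det → Reach C) : Reach A := by
  set B : Matrix (Fin (n+1)) (Fin (n+1)) ℤ := fun k => A (Equiv.swap 0 i k) with hB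
  have hBdet : IsUnit B.det := by
    have : B = A.submatrix (Equiv.swap 0 i) id := rfl
    rw [this, Matrix.det_permute]
    exact ((Equiv.Perm.sign (Equiv.swap 0 i)).isUnit.mul hA)
  have hrB : Reach B := by
    apply phaseB B hBdet
    · show A (Equiv.swap 0 i 0) 0 = 1
      rw [Equiv.swap_apply_left]; exact h1
    · intro k hk
      show A (Equiv.swap 0 i k) 0 = 0
      apply h0
      intro e
      apply hk
      have := congrArg (Equiv.swap 0 i) e
      rwa [Equiv.swap_apply_self, Equiv.swap_apply_right] at this
    · exact IH
  have := Reach.swap 0 i hrB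
  convert this using 1
  refine iff_of_eq (congrArg Reach ?_)
  funext k
  simp [hB]

lemma natAbs_emod_lt (a : ℤ) {b : ℤ} (hb : b ≠ 0) : (a % b).natAbs < b.natAbs := by
  have h1 : 0 ≤ a % b := Int.emod_nonneg a hb
  have h2 : a % b < |b| := Int.emod_lt_abs a hb
  have := Int.natAbs_lt_natAbs_of_nonneg_of_lt h1 h2
  rwa [Int.natAbs_abs] at this

lemma reach_unimodular : ∀ n (A : Matrix (Fin n) (Fin n) ℤ), IsUnit A.det → Reach A := by
  intro n
  induction n with
  | zero =>
    intro A _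
    have : A = 1 := Subsingleton.elim _ _
    rw [this]; exact Reach.one
  | succ n IH =>
    suffices key : ∀ s : ℕ, ∀ A : Matrix (Fin (n+1)) (Fin (n+1)) ℤ,
        (∑ k, (A k 0).natAbs) = s → IsUnit A.det → Reach A by
      intro A hA; exact key _ A rfl hA
    intro s
    induction s using Nat.strong_induction_on with
    | _ s IH2 =>
    intro A hs hA
    by_cases hpair : ∃ i j, i ≠ j ∧ A i 0 ≠ 0 ∧ A j 0 ≠ 0 ∧ (A j 0).natAbs ≤ (A i 0).natAbs
    · obtain ⟨i, j, hij, hi, hj, hle⟩ := hpair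
      set q : ℤ := A i 0 / A j 0 with hq
      set A' := A.updateRow i (A i + (-q) • A j) with hA'
      have hA'i0 : A' i 0 = A i 0 % A j 0 := by
        rw [hA', Matrix.updateRow_self]
        simp only [Pi.add_apply, Pi.smul_apply, smul_eq_mul, hq]
        rw [Int.emod_def]; ring
      have hA'det : IsUnit A'.det := by
        rw [hA', Matrix.det_updateRow_add_smul_self A hij]; exact hA
      have hlt : (A' i 0).natAbs < (A i 0).natAbs := by
        rw [hA'i0]
        exact lt_of_lt_of_le (natAbs_emod_lt _ hj) hle
      have hmeas : (∑ k, (A' k 0).natAbs) < s := by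
        rw [← hs]
        apply Finset.sum_lt_sum
        · intro k _
          by_cases hk : k = i
          · subst hk; exact le_of_lt hlt
          · rw [hA', Matrix.updateRow_ne hk]
        · exact ⟨i, Finset.mem_univ i, hlt⟩
      have hrA' : Reach A' := IH2 _ hmeas A' rfl hA'det
      have := Reach.add q hij hrA'
      convert this using 1
      funext k
      by_cases hk : k = i
      · subst hk
        rw [hA', Matrix.updateRow_self, Matrix.updateRow_ne (Ne.symm hij),
          Matrix.updateRow_self]
        funext l
        simp
      · rw [Matrix.updateRow_ne hk, hA', Matrix.updateRow_ne hk]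
    · -- at most one nonzero entry in column 0
      have huniq : ∀ i j : Fin (n+1), i ≠ j → A i 0 ≠ 0 → A j 0 = 0 := by
        intro i j hij hi
        by_contra hj
        rcases le_total (A j 0).natAbs (A i 0).natAbs with h | h
        · exact hpair ⟨i, j, hij, hi, hj, h⟩
        · exact hpair ⟨j, i, Ne.symm hij, hj, hi, h⟩
      have hex : ∃ i, A i 0 ≠ 0 := by
        by_contra hno
        push_neg at hno
        have : A.det = 0 := Matrix.det_eq_zero_of_column_eq_zero 0 hno
        rw [this] at hA
        exact (by norm_num : ¬ IsUnit (0 : ℤ)) hA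
      obtain ⟨i, hi⟩ := hex
      have hzero : ∀ k, k ≠ i → A k 0 = 0 := fun k hk => huniq i k (Ne.symm hk) hi
      -- A i 0 is a unit
      have hunit : IsUnit (A i 0) := by
        have hdet := Matrix.det_succ_column_zero A
        rw [Finset.sum_eq_single i] at hdet
        · rw [hdet] at hA
          exact isUnit_of_mul_isUnit_right (isUnit_of_mul_isUnit_left hA)
        · intro k _ hk
          rw [hzero k hk]; ring
        · simp
      rcases Int.isUnit_iff.mp hunit with h1 | h1
      · exact reduced_case A i hA h1 hzero IH
      · -- negate row i first
        set A' := A.updateRow i (-(A i)) with hA'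
        have hA'det : IsUnit A'.det := by
          have : -(A i) = (-1 : ℤ) • A i := by funext l; simp
          rw [hA', this, Matrix.det_updateRow_smul, Matrix.updateRow_eq_self]
          exact (IsUnit.neg isUnit_one).mul hA
        have h1' : A' i 0 = 1 := by
          rw [hA', Matrix.updateRow_self]
          simp [h1]
        have hzero' : ∀ k, k ≠ i → A' k 0 = 0 := by
          intro k hk
          rw [hA', Matrix.updateRow_ne hk]
          exact hzero k hk
        have hrA' : Reach A' := reduced_case A' i hA'det h1' hzero' IH
        have := Reach.neg i hrA'
        convert this using 1
        funext k
        by_cases hk : k = i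
        · subst hk
          rw [hA', Matrix.updateRow_self, Matrix.updateRow_self]
          simp
        · rw [Matrix.updateRow_ne hk, hA', Matrix.updateRow_ne hk]

lemma subsingleton_of_closure_eq_top {G : Type*} [Group G] {N : Subgroup G} [N.Normal]
    (h : N = ⊤) : Subsingleton (G ⧸ N) := by
  subst h
  constructor
  intro a b
  induction a using QuotientGroup.induction_on
  induction b using QuotientGroup.induction_on
  rw [QuotientGroup.eq]
  trivial

lemma normalClosure_range_update_inv {G : Type*} [Group G] {m : ℕ} (r : Fin m → G) (i : Fin m) :
    Subgroup.normalClosure (Set.range (Function.update r i (r i)⁻¹)) =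
      Subgroup.normalClosure (Set.range r) := by
  set r' := Function.update r i (r i)⁻¹ with hr'
  have hk_ne : ∀ k, k ≠ i → r' k = r k := fun k hk => Function.update_of_ne hk _ r
  have hk_i : r' i = (r i)⁻¹ := Function.update_self i _ r
  apply le_antisymm <;> refine Subgroup.normalClosure_le_normal ?_ <;> rintro x ⟨k, rfl⟩
  · by_cases hk : k = i
    · subst hk
      rw [hk_i]
      exact Subgroup.inv_mem _ (Subgroup.subset_normalClosure ⟨k, rfl⟩)
    · rw [hk_ne k hk]
      exact Subgroup.subset_normalClosure ⟨k, rfl⟩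
  · have hmem : ∀ k, r' k ∈ Subgroup.normalClosure (Set.range r') := fun k =>
      Subgroup.subset_normalClosure ⟨k, rfl⟩
    by_cases hk : k = i
    · subst hk
      have := Subgroup.inv_mem _ (hmem k)
      rwa [hk_i, inv_inv] at this
    · have := hmem k
      rwa [hk_ne k hk] at this

lemma normalClosure_range_update_mul {G : Type*} [Group G] {m : ℕ} (r : Fin m → G) {i j : Fin m}
    (hij : i ≠ j) (c : ℤ) :
    Subgroup.normalClosure (Set.range (Function.update r i (r i * (r j) ^ c))) =
      Subgroup.normalClosure (Set.range r) := by
  set r' := Function.update r i (r i * (r j) ^ c) with hr'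
  have hk_ne : ∀ k, k ≠ i → r' k = r k := fun k hk => Function.update_of_ne hk _ r
  have hk_i : r' i = r i * (r j) ^ c := Function.update_self i _ r
  apply le_antisymm <;> refine Subgroup.normalClosure_le_normal ?_ <;> rintro x ⟨k, rfl⟩
  · by_cases hk : k = i
    · subst hk
      rw [hk_i]
      exact Subgroup.mul_mem _ (Subgroup.subset_normalClosure ⟨k, rfl⟩)
        (Subgroup.zpow_mem _ (Subgroup.subset_normalClosure (s := Set.range r)
          ⟨j, rfl⟩) c)
    · rw [hk_ne k hk]
      exact Subgroup.subset_normalClosure ⟨k, rfl⟩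
  · have hmem : ∀ k, r' k ∈ Subgroup.normalClosure (Set.range r') := fun k =>
      Subgroup.subset_normalClosure ⟨k, rfl⟩
    by_cases hk : k = i
    · subst hk
      have h1 := hmem k
      have h2 := hmem j
      rw [hk_i] at h1
      rw [hk_ne j (Ne.symm hij)] at h2
      have := Subgroup.mul_mem _ h1 (Subgroup.inv_mem _ (Subgroup.zpow_mem _ h2 c))
      rwa [mul_assoc, mul_inv_cancel, mul_one] at this
    · have := hmem k
      rwa [hk_ne k hk] at this

lemma normalClosure_range_of (n : ℕ) :
    Subgroup.normalClosure (Set.range (FreeGroup.of : Fin n → FreeGroup (Fin n))) = ⊤ := by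
  rw [eq_top_iff]
  intro x _
  induction x using FreeGroup.induction_on with
  | C1 => exact Subgroup.one_mem _
  | of i => exact Subgroup.subset_normalClosure ⟨i, rfl⟩
  | inv_of i h => exact Subgroup.inv_mem _ (h trivial)
  | mul a b ha hb => exact Subgroup.mul_mem _ (ha trivial) (hb trivial)

lemma exists_presentation {n : ℕ} {A : Matrix (Fin n) (Fin n) ℤ} (h : Reach A) :
    ∃ r : Fin n → FreeGroup (Fin n),
      (∀ i, Multiplicative.toAdd
        (FreeGroup.lift (fun j : Fin n => Multiplicative.ofAdd (Pi.single j (1 : ℤ))) (r i)) = A i) ∧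
      Subgroup.normalClosure (Set.range r) = ⊤ := by
  set ab := FreeGroup.lift (fun j : Fin n => Multiplicative.ofAdd (Pi.single j (1 : ℤ))) with hab
  induction h with
  | one =>
    refine ⟨FreeGroup.of, fun i => ?_, normalClosure_range_of n⟩
    rw [hab, FreeGroup.lift_apply_of]
    funext j
    simp [Pi.single_apply, Matrix.one_apply, eq_comm]
  | @neg A i hA IH =>
    obtain ⟨r, hr, hcl⟩ := IH
    refine ⟨Function.update r i (r i)⁻¹, fun k => ?_,
      (normalClosure_range_update_inv r i).trans hcl⟩
    by_cases hk : k = i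
    · subst hk
      rw [Function.update_self, map_inv, Matrix.updateRow_self]
      funext l
      simp [← hr k]
    · rw [Function.update_of_ne hk, Matrix.updateRow_ne hk]
      exact hr k
  | @add A c i j hij hA IH =>
    obtain ⟨r, hr, hcl⟩ := IH
    refine ⟨Function.update r i (r i * (r j) ^ c), fun k => ?_,
      (normalClosure_range_update_mul r hij c).trans hcl⟩
    by_cases hk : k = i
    · subst hk
      rw [Function.update_self, _root_.map_mul, map_zpow, Matrix.updateRow_self]
      funext l
      simp [← hr k, ← hr j]
    · rw [Function.update_of_ne hk, Matrix.updateRow_ne hk]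
      exact hr k
  | @swap A i j hA IH =>
    obtain ⟨r, hr, hcl⟩ := IH
    refine ⟨fun k => r (Equiv.swap i j k), fun k => hr _, ?_⟩
    rw [← hcl]
    congr 1
    exact (Equiv.swap i j).surjective.range_comp r

theorem stmt_10 (n : ℕ) (A : Matrix (Fin n) (Fin n) ℤ) (hA : IsUnit A.det) :
    ∃ r : Fin n → FreeGroup (Fin n),
      (∀ i, Multiplicative.toAdd
        (FreeGroup.lift (fun j : Fin n => Multiplicative.ofAdd (Pi.single j (1 : ℤ))) (r i)) = A i) ∧
      Subsingleton (FreeGroup (Fin n) ⧸ Subgroup.normalClosure (Set.range r)) := by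
  obtain ⟨r, hr, hcl⟩ := exists_presentation (reach_unimodular n A hA)
  exact ⟨r, hr, subsingleton_of_closure_eq_top hcl⟩
end
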